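/- Let d ≥ 1, m₀ > 0, α > 0, and let ψ be the Lévy characteristic with drift b, diffusion σ², Poisson intensity λ and jump measure r. Then for every real-valued Schwartz function f on ℝ^d, the function x ↦ ψ((G*f)(x)) is Lebesgue integrable on ℝ^d, so that the characteristic functional C_φ(f) = exp(∫_{ℝ^d} ψ((G*f)(x)) dx) of the solution field is well defined, and moreover |C_φ(f)| ≤ 1. -/

import Mathlib

open MeasureTheory Filter Topology

/-- The Lévy characteristic with drift `b`, diffusion `σ2`, Poisson intensity `lam`
and jump measure `r`. -/
noncomputable def levyChar (b σ2 lam : ℝ) (r : Measure ℝ) (t : ℝ) : ℂ :=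
  Complex.I * (b : ℂ) * (t : ℂ) - ((σ2 / 2 : ℝ) : ℂ) * (t : ℂ) ^ 2
    + (lam : ℂ) * ∫ s : ℝ, (Complex.exp (Complex.I * (s : ℂ) * (t : ℂ)) - 1) ∂r

/-- The convoluted test function `G*f`, defined as the inverse Fourier transform of the
product of the multiplier `k ↦ (‖k‖² + m₀²)^(−α)` with the Fourier transform of `f`. -/
noncomputable def Gconv (d : ℕ) (m0 α : ℝ)
    (f : SchwartzMap (EuclideanSpace ℝ (Fin d)) ℂ) :
    EuclideanSpace ℝ (Fin d) → ℂ :=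
  FourierTransformInv.fourierInv
    (fun k => (((‖k‖ ^ 2 + m0 ^ 2) ^ (-α) : ℝ) : ℂ) *
      FourierTransform.fourier (fun x => f x) k)

set_option synthInstance.maxHeartbeats 400000
set_option maxHeartbeats 1000000

section TemperateGrowth

variable {F : Type*} [NormedAddCommGroup F] [InnerProductSpace ℝ F]

lemma hasTemperateGrowth_normSq_add (c : ℝ) (hc : 0 < c) :
    Function.HasTemperateGrowth (fun x : F => ‖x‖ ^ 2 + c) := by
  have hderiv : ∀ x : F, HasFDerivAt (fun x : F => ‖x‖ ^ 2 + c) (2 • (innerSL ℝ x)) x := by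
    intro x
    simpa using (hasStrictFDerivAt_norm_sq x).hasFDerivAt.add_const c
  set L : F →L[ℝ] F →L[ℝ] ℝ := (2 : ℝ) • (innerSL ℝ : F →L[ℝ] F →L[ℝ] ℝ) with hL
  have hfd : (fderiv ℝ (fun x : F => ‖x‖ ^ 2 + c)) = fun x => L x := by
    funext x
    rw [(hderiv x).fderiv, hL]
    simp [two_smul]
  apply Function.HasTemperateGrowth.of_fderiv (k := 2) (C := 1 + c)
  · rw [hfd]
    exact L.hasTemperateGrowth
  · exact fun x => (hderiv x).differentiableAt
  · intro x
    have h0 : 0 ≤ ‖x‖ := norm_nonneg x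
    have : ‖(‖x‖ ^ 2 + c)‖ = ‖x‖ ^ 2 + c := abs_of_pos (by positivity)
    rw [this]
    nlinarith [sq_nonneg (1 + ‖x‖)]

lemma contDiffOn_rpow_Ioi (p : ℝ) (n : WithTop ℕ∞) :
    ContDiffOn ℝ n (fun v : ℝ => v ^ p) (Set.Ioi 0) := fun v hv =>
  (Real.contDiffAt_rpow_const_of_ne (ne_of_gt hv)).contDiffWithinAt

lemma iteratedDerivWithin_rpow_Ioi (p : ℝ) (n : ℕ) :
    ∀ u ∈ Set.Ioi (0 : ℝ), iteratedDerivWithin n (fun v : ℝ => v ^ p) (Set.Ioi 0) u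
      = (∏ j ∈ Finset.range n, (p - j)) * u ^ (p - n) := by
  induction n generalizing p with
  | zero => intro u hu; simp
  | succ n ih =>
    intro u hu
    rw [iteratedDerivWithin_succ']
    have heq : Set.EqOn (derivWithin (fun v : ℝ => v ^ p) (Set.Ioi 0))
        (fun v : ℝ => p * v ^ (p - 1)) (Set.Ioi 0) := by
      intro v hv
      rw [derivWithin_of_isOpen isOpen_Ioi hv, Real.deriv_rpow_const v p]
    rw [iteratedDerivWithin_congr heq hu]
    have hsmul : (fun v : ℝ => p * v ^ (p - 1)) = p • (fun v : ℝ => v ^ (p - 1)) := by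
      funext v; simp [smul_eq_mul]
    rw [hsmul, iteratedDerivWithin_const_smul hu (uniqueDiffOn_Ioi 0) p
      (contDiffOn_rpow_Ioi (p - 1) n u hu), ih (p - 1) u hu]
    rw [Finset.prod_range_succ']
    have : ∀ j : ℕ, p - (↑(j + 1) : ℝ) = p - 1 - j := by intro j; push_cast; ring
    rw [Finset.prod_congr rfl fun j _ => this j]
    have he : p - (↑(n + 1) : ℝ) = p - 1 - n := by push_cast; ring
    rw [he]
    simp [smul_eq_mul]; ring


lemma hasTemperateGrowth_multiplier (c α : ℝ) (hc : 0 < c) (hα : 0 < α) :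
    Function.HasTemperateGrowth (fun x : F => (‖x‖ ^ 2 + c) ^ (-α)) := by
  have hqpos : ∀ x : F, 0 < ‖x‖ ^ 2 + c := fun x => by positivity
  have hq_smooth : ∀ N : WithTop ℕ∞, ContDiff ℝ N (fun x : F => ‖x‖ ^ 2 + c) :=
    fun N => (contDiff_norm_sq ℝ).add contDiff_const
  constructor
  · rw [contDiff_iff_contDiffAt]
    intro x
    exact (Real.contDiffAt_rpow_const_of_ne (ne_of_gt (hqpos x))).comp x (hq_smooth _).contDiffAt
  · intro n
    obtain ⟨l, C₀, hC₀, hq⟩ :=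
      (hasTemperateGrowth_normSq_add (F := F) c hc).norm_iteratedFDeriv_le_uniform n
    set C : ℝ := ∑ i ∈ Finset.range (n + 1),
      |∏ j ∈ Finset.range i, (-α - j)| * c ^ (-α - i) with hCdef
    refine ⟨l * n, (n.factorial : ℝ) * C * (1 + C₀) ^ n, fun x => ?_⟩
    have hgC : ∀ i, i ≤ n →
        ‖iteratedFDerivWithin ℝ i (fun v : ℝ => v ^ (-α)) (Set.Ioi 0) (‖x‖ ^ 2 + c)‖ ≤ C := by
      intro i hi
      rw [norm_iteratedFDerivWithin_eq_norm_iteratedDerivWithin,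
        iteratedDerivWithin_rpow_Ioi (-α) i _ (hqpos x)]
      have hterm : ‖(∏ j ∈ Finset.range i, (-α - (j : ℝ))) * (‖x‖ ^ 2 + c) ^ (-α - i)‖
          ≤ |∏ j ∈ Finset.range i, (-α - (j : ℝ))| * c ^ (-α - i) := by
        rw [norm_mul, Real.norm_eq_abs, Real.norm_eq_abs,
          abs_of_pos (Real.rpow_pos_of_pos (hqpos x) _)]
        have hz : -α - (i:ℝ) ≤ 0 := by
          have : (0:ℝ) ≤ i := Nat.cast_nonneg i
          linarith
        exact mul_le_mul_of_nonneg_left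
          (Real.rpow_le_rpow_of_nonpos hc (le_add_of_nonneg_left (by positivity)) hz)
          (abs_nonneg _)
      refine hterm.trans ?_
      rw [hCdef]
      have hnonneg : ∀ j ∈ Finset.range (n+1), (0:ℝ) ≤
          |∏ k ∈ Finset.range j, (-α - (k : ℝ))| * c ^ (-α - j) := fun j _ => by
        positivity
      exact Finset.single_le_sum hnonneg (Finset.mem_range.mpr (Nat.lt_succ_of_le hi))
    have hD : ∀ i, 1 ≤ i → i ≤ n →
        ‖iteratedFDerivWithin ℝ i (fun x : F => ‖x‖ ^ 2 + c) Set.univ x‖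
          ≤ ((1 + C₀) * (1 + ‖x‖) ^ l) ^ i := by
      intro i h1 h2
      rw [iteratedFDerivWithin_univ]
      have hDge1 : (1:ℝ) ≤ (1 + C₀) * (1 + ‖x‖) ^ l := by
        have h1x : (1:ℝ) ≤ (1 + ‖x‖) ^ l := one_le_pow₀ (by linarith [norm_nonneg x])
        nlinarith
      calc ‖iteratedFDeriv ℝ i (fun x : F => ‖x‖ ^ 2 + c) x‖ ≤ C₀ * (1 + ‖x‖) ^ l :=
            hq i h2 x
        _ ≤ (1 + C₀) * (1 + ‖x‖) ^ l := by
            have : (0:ℝ) < (1 + ‖x‖) ^ l := by positivity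
            nlinarith
        _ ≤ ((1 + C₀) * (1 + ‖x‖) ^ l) ^ i := le_self_pow₀ (hDge1) (by omega)
    have hcomp := norm_iteratedFDerivWithin_comp_le (𝕜 := ℝ)
      (g := fun v : ℝ => v ^ (-α)) (f := fun x : F => ‖x‖ ^ 2 + c) (n := n)
      (s := Set.univ) (t := Set.Ioi 0) (x := x) (N := (⊤ : WithTop ℕ∞))
      (contDiffOn_rpow_Ioi (-α) ⊤) ((hq_smooth _).contDiffOn) le_top
      (uniqueDiffOn_Ioi 0) uniqueDiffOn_univ (fun y _ => hqpos y) (Set.mem_univ x)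
      hgC hD
    rw [iteratedFDerivWithin_univ] at hcomp
    have hfun : ((fun v : ℝ => v ^ (-α)) ∘ fun x : F => ‖x‖ ^ 2 + c)
        = fun x : F => (‖x‖ ^ 2 + c) ^ (-α) := rfl
    rw [hfun] at hcomp
    refine hcomp.trans_eq ?_
    rw [mul_pow, ← pow_mul]
    ring

end TemperateGrowth

section Levy

lemma abs_exp_ofReal_mul_I_sub_one_le (θ : ℝ) :
    ‖Complex.exp ((θ : ℂ) * Complex.I) - 1‖ ≤ |θ| := by
  have hcos : Real.cos θ = 1 - 2 * Real.sin (θ / 2) ^ 2 := by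
    have h2 := Real.cos_sq (θ / 2)
    have h3 := Real.sin_sq_add_cos_sq (θ / 2)
    rw [show 2 * (θ / 2) = θ by ring] at h2
    nlinarith
  have h4 : Real.sin (θ / 2) ^ 2 ≤ (θ / 2) ^ 2 := by
    have := Real.abs_sin_le_abs (x := θ / 2)
    nlinarith [abs_nonneg (θ/2), sq_abs (Real.sin (θ/2)), sq_abs (θ/2),
      mul_self_le_mul_self (abs_nonneg (Real.sin (θ/2))) this]
  have heq : Complex.exp ((θ : ℂ) * Complex.I) - 1
      = ((Real.cos θ - 1 : ℝ) : ℂ) + ((Real.sin θ : ℝ) : ℂ) * Complex.I := by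
    rw [Complex.exp_mul_I]
    push_cast
    ring
  rw [heq, Complex.norm_add_mul_I, ← Real.sqrt_sq_eq_abs]
  apply Real.sqrt_le_sqrt
  have h1 := Real.sin_sq_add_cos_sq θ
  nlinarith

lemma integrable_exp_I_mul_sub_one (r : Measure ℝ) [IsProbabilityMeasure r]
    (hmom1 : Integrable (fun s : ℝ => |s|) r) (t : ℝ) :
    Integrable (fun s : ℝ => Complex.exp (Complex.I * s * t) - 1) r := by
  refine Integrable.mono' (g := fun _ : ℝ => (2 : ℝ)) (integrable_const 2) ?_ ?_
  · exact (Continuous.sub (Complex.continuous_exp.comp (by continuity)) continuous_const)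
      |>.aestronglyMeasurable
  · refine Filter.Eventually.of_forall fun s => ?_
    have h1 : ‖Complex.exp (Complex.I * s * t)‖ = 1 := by
      rw [Complex.norm_exp]
      simp
    calc ‖Complex.exp (Complex.I * s * t) - 1‖
        ≤ ‖Complex.exp (Complex.I * s * t)‖ + ‖(1 : ℂ)‖ := norm_sub_le _ _
      _ ≤ 2 := by rw [h1]; norm_num

lemma norm_integral_exp_I_mul_sub_one_le (r : Measure ℝ) [IsProbabilityMeasure r]
    (hmom1 : Integrable (fun s : ℝ => |s|) r) (t : ℝ) :
    ‖∫ s : ℝ, (Complex.exp (Complex.I * s * t) - 1) ∂r‖ ≤ (∫ s : ℝ, |s| ∂r) * |t| := by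
  calc ‖∫ s : ℝ, (Complex.exp (Complex.I * s * t) - 1) ∂r‖
      ≤ ∫ s : ℝ, ‖Complex.exp (Complex.I * s * t) - 1‖ ∂r := norm_integral_le_integral_norm _
    _ ≤ ∫ s : ℝ, |s| * |t| ∂r := by
        refine integral_mono_of_nonneg (Filter.Eventually.of_forall fun s => norm_nonneg _)
          (hmom1.mul_const |t|) (Filter.Eventually.of_forall fun s => ?_)
        simp only []
        have : Complex.I * s * t = ((s * t : ℝ) : ℂ) * Complex.I := by push_cast; ring
        rw [this]
        calc ‖Complex.exp (((s * t : ℝ) : ℂ) * Complex.I) - 1‖ ≤ |s * t| :=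
              abs_exp_ofReal_mul_I_sub_one_le (s * t)
          _ = |s| * |t| := abs_mul s t
    _ = (∫ s : ℝ, |s| ∂r) * |t| := by rw [integral_mul_const]

lemma levyChar_norm_le (b σ2 lam : ℝ) (hlam : 0 ≤ lam) (r : Measure ℝ) [IsProbabilityMeasure r]
    (hmom1 : Integrable (fun s : ℝ => |s|) r) (t : ℝ) :
    ‖levyChar b σ2 lam r t‖
      ≤ (|b| + lam * ∫ s : ℝ, |s| ∂r) * |t| + |σ2| / 2 * t ^ 2 := by
  have h1 : ‖Complex.I * (b : ℂ) * (t : ℂ)‖ = |b| * |t| := by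
    simp [map_mul, Complex.norm_real]
  have h2 : ‖((σ2 / 2 : ℝ) : ℂ) * (t : ℂ) ^ 2‖ = |σ2| / 2 * t ^ 2 := by
    simp [map_mul, Complex.norm_real, abs_div, map_pow, sq_abs]
    try ring
  have h3 : ‖(lam : ℂ) * ∫ s : ℝ, (Complex.exp (Complex.I * s * t) - 1) ∂r‖
      ≤ lam * ((∫ s : ℝ, |s| ∂r) * |t|) := by
    rw [norm_mul, Complex.norm_real, Real.norm_eq_abs, abs_of_nonneg hlam]
    exact mul_le_mul_of_nonneg_left (norm_integral_exp_I_mul_sub_one_le r hmom1 t) hlam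
  calc ‖levyChar b σ2 lam r t‖
      ≤ ‖Complex.I * (b : ℂ) * (t : ℂ) - ((σ2 / 2 : ℝ) : ℂ) * (t : ℂ) ^ 2‖
        + ‖(lam : ℂ) * ∫ s : ℝ, (Complex.exp (Complex.I * s * t) - 1) ∂r‖ := norm_add_le _ _
    _ ≤ (‖Complex.I * (b : ℂ) * (t : ℂ)‖ + ‖((σ2 / 2 : ℝ) : ℂ) * (t : ℂ) ^ 2‖)
        + ‖(lam : ℂ) * ∫ s : ℝ, (Complex.exp (Complex.I * s * t) - 1) ∂r‖ := by
        gcongr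
        exact norm_sub_le _ _
    _ ≤ (|b| * |t| + |σ2| / 2 * t ^ 2) + lam * ((∫ s : ℝ, |s| ∂r) * |t|) := by
        rw [h1, h2]; gcongr
    _ = (|b| + lam * ∫ s : ℝ, |s| ∂r) * |t| + |σ2| / 2 * t ^ 2 := by ring

lemma levyChar_continuous (b σ2 lam : ℝ) (r : Measure ℝ) [IsProbabilityMeasure r] :
    Continuous (levyChar b σ2 lam r) := by
  unfold levyChar
  refine Continuous.add (by continuity) (Continuous.mul continuous_const ?_)
  refine continuous_of_dominated (bound := fun _ : ℝ => (2 : ℝ)) ?_ ?_ (integrable_const 2) ?_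
  · intro t
    exact (Continuous.sub (Complex.continuous_exp.comp (by continuity)) continuous_const)
      |>.aestronglyMeasurable
  · intro t
    refine Filter.Eventually.of_forall fun s => ?_
    have h1 : ‖Complex.exp (Complex.I * s * t)‖ = 1 := by
      rw [Complex.norm_exp]; simp
    calc ‖Complex.exp (Complex.I * s * t) - 1‖
        ≤ ‖Complex.exp (Complex.I * s * t)‖ + ‖(1 : ℂ)‖ := norm_sub_le _ _
      _ ≤ 2 := by rw [h1]; norm_num
  · exact Filter.Eventually.of_forall fun s => by continuity

lemma levyChar_re_nonpos (b σ2 lam : ℝ) (hσ : 0 ≤ σ2) (hlam : 0 ≤ lam)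
    (r : Measure ℝ) [IsProbabilityMeasure r]
    (hmom1 : Integrable (fun s : ℝ => |s|) r) (t : ℝ) :
    (levyChar b σ2 lam r t).re ≤ 0 := by
  unfold levyChar
  rw [Complex.add_re, Complex.sub_re]
  have h1 : (Complex.I * (b : ℂ) * (t : ℂ)).re = 0 := by simp
  have h2 : (((σ2 / 2 : ℝ) : ℂ) * (t : ℂ) ^ 2).re = σ2 / 2 * t ^ 2 := by
    simp [← Complex.ofReal_pow]
    try ring
  have h3 : ((lam : ℂ) * ∫ s : ℝ, (Complex.exp (Complex.I * s * t) - 1) ∂r).re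
      = lam * (∫ s : ℝ, (Complex.exp (Complex.I * s * t) - 1) ∂r).re := by
    simp
  have h4 : (∫ s : ℝ, (Complex.exp (Complex.I * s * t) - 1) ∂r).re
      = ∫ s : ℝ, (Complex.exp (Complex.I * s * t) - 1).re ∂r := by
    have h := integral_re (integrable_exp_I_mul_sub_one r hmom1 t)
    rw [RCLike.re_eq_complex_re] at h
    exact h.symm
  have h5 : ∫ s : ℝ, (Complex.exp (Complex.I * s * t) - 1).re ∂r ≤ 0 := by
    refine integral_nonpos fun s => ?_
    show (Complex.exp (Complex.I * s * t) - 1).re ≤ 0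
    have : Complex.I * s * t = ((s * t : ℝ) : ℂ) * Complex.I := by push_cast; ring
    rw [Complex.sub_re, this, Complex.exp_ofReal_mul_I_re]
    simp only [Complex.one_re]
    nlinarith [Real.cos_le_one (s * t)]
  rw [h1, h2, h3, h4]
  nlinarith [mul_nonneg hlam (neg_nonneg.mpr h5), sq_nonneg t]

end Levy

theorem charFunctional_of_solution_field_well_defined
    (d : ℕ) (hd : 1 ≤ d) (m0 α : ℝ) (hm : 0 < m0) (hα : 0 < α)
    (b σ2 lam : ℝ) (hσ : 0 ≤ σ2) (hlam : 0 ≤ lam)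
    (r : Measure ℝ) [IsProbabilityMeasure r] (hr0 : r {0} = 0)
    (hmom : ∀ n : ℕ, Integrable (fun s : ℝ => |s| ^ n) r)
    (f : SchwartzMap (EuclideanSpace ℝ (Fin d)) ℂ)
    (hf : ∀ x, (f x).im = 0) :
    Integrable (fun x => levyChar b σ2 lam r ((Gconv d m0 α f x).re)) ∧
    ‖Complex.exp
        (∫ x, levyChar b σ2 lam r ((Gconv d m0 α f x).re))‖ ≤ 1 := by
  have hmul : Function.HasTemperateGrowth
      (fun k : EuclideanSpace ℝ (Fin d) => (‖k‖ ^ 2 + m0 ^ 2) ^ (-α)) :=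
    hasTemperateGrowth_multiplier (m0 ^ 2) α (by positivity) hα
  set B : ℂ →L[ℝ] ℝ →L[ℝ] ℂ :=
    (ContinuousLinearMap.lsmul ℝ ℝ : ℝ →L[ℝ] ℂ →L[ℝ] ℂ).flip with hB
  set G : SchwartzMap (EuclideanSpace ℝ (Fin d)) ℂ :=
    FourierTransformInv.fourierInv
      (SchwartzMap.bilinLeftCLM B hmul (SchwartzMap.fourierTransformCLM ℂ f)) with hG
  have hGconv : Gconv d m0 α f = ⇑G := by
    have h1 : (fun k : EuclideanSpace ℝ (Fin d) =>
        (((‖k‖ ^ 2 + m0 ^ 2) ^ (-α) : ℝ) : ℂ) * FourierTransform.fourier (fun x => f x) k)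
        = ⇑(SchwartzMap.bilinLeftCLM B hmul (SchwartzMap.fourierTransformCLM ℂ f)) := by
      funext k
      have hap : (SchwartzMap.bilinLeftCLM B hmul (SchwartzMap.fourierTransformCLM ℂ f)) k
          = B ((SchwartzMap.fourierTransformCLM ℂ f) k) ((‖k‖ ^ 2 + m0 ^ 2) ^ (-α)) := rfl
      rw [hap, SchwartzMap.fourierTransformCLM_apply, SchwartzMap.fourier_coe, hB,
        ContinuousLinearMap.flip_apply, ContinuousLinearMap.lsmul_apply,
        Complex.real_smul]
    rw [Gconv, h1, hG]
    exact (SchwartzMap.fourierInv_coe _).symm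
  rw [hGconv]
  have hmom1 : Integrable (fun s : ℝ => |s|) r := by simpa using hmom 1
  set M₁ : ℝ := ∫ s : ℝ, |s| ∂r with hM₁
  have hM₁nonneg : 0 ≤ M₁ := integral_nonneg fun s => abs_nonneg s
  have hGint : Integrable (⇑G) (volume : Measure (EuclideanSpace ℝ (Fin d))) := G.integrable
  set M : ℝ := SchwartzMap.seminorm ℝ 0 0 G with hM
  have hMb : ∀ x, ‖G x‖ ≤ M := fun x => G.norm_le_seminorm ℝ x
  have hM0 : 0 ≤ M := le_trans (norm_nonneg _) (hMb 0)
  set c : ℝ := |b| + lam * M₁ + |σ2| / 2 * M with hc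
  have hbound : ∀ x, ‖levyChar b σ2 lam r ((G x).re)‖ ≤ c * ‖G x‖ := by
    intro x
    have h := levyChar_norm_le b σ2 lam hlam r hmom1 ((G x).re)
    rw [← hM₁] at h
    have habs : |(G x).re| ≤ ‖G x‖ := Complex.abs_re_le_norm _
    have hsq : ((G x).re) ^ 2 ≤ M * ‖G x‖ := by
      calc ((G x).re) ^ 2 = |(G x).re| ^ 2 := (sq_abs _).symm
        _ ≤ ‖G x‖ ^ 2 := pow_le_pow_left₀ (abs_nonneg _) habs 2
        _ = ‖G x‖ * ‖G x‖ := sq ‖G x‖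
        _ ≤ M * ‖G x‖ := mul_le_mul_of_nonneg_right (hMb x) (norm_nonneg _)
    have hco : 0 ≤ |b| + lam * M₁ := by positivity
    calc ‖levyChar b σ2 lam r ((G x).re)‖
        ≤ (|b| + lam * M₁) * |(G x).re| + |σ2| / 2 * ((G x).re) ^ 2 := h
      _ ≤ (|b| + lam * M₁) * ‖G x‖ + |σ2| / 2 * (M * ‖G x‖) := by
          gcongr
      _ = c * ‖G x‖ := by rw [hc]; ring
  have hmeas : Continuous (fun x => levyChar b σ2 lam r ((G x).re)) :=
    (levyChar_continuous b σ2 lam r).comp (Complex.continuous_re.comp G.continuous)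
  have hint : Integrable (fun x => levyChar b σ2 lam r ((G x).re)) :=
    Integrable.mono' (hGint.norm.const_mul c) hmeas.aestronglyMeasurable
      (Filter.Eventually.of_forall hbound)
  refine ⟨hint, ?_⟩
  rw [Complex.norm_exp, Real.exp_le_one_iff]
  have hre : (∫ x, levyChar b σ2 lam r ((G x).re)).re
      = ∫ x, (levyChar b σ2 lam r ((G x).re)).re := by
    have h := integral_re hint
    rw [RCLike.re_eq_complex_re] at h
    exact h.symm
  rw [hre]
  refine integral_nonpos fun x => ?_
  show (levyChar b σ2 lam r ((G x).re)).re ≤ 0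
  exact levyChar_re_nonpos b σ2 lam hσ hlam r hmom1 _
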